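/- Let A < B and suppose that for every ν > 0 there exist bounded Lipschitz functions v⁺_ν, v⁻_ν : ℝⁿ → ℝ such that for all z: J̄ - ∫J(y)e^{-y·p}exp(v⁺_ν(z-y) - v⁺_ν(z))dy - c(z) ≤ A + ν and J̄ - ∫J(y)e^{-y·p}exp(v⁻_ν(z-y) - v⁻_ν(z))dy - c(z) ≥ B - ν. Assuming the comparison principle holds for the equation εv + J̄ - ∫J(y)e^{-y·p}exp(v(z-y)-v(z))dy - c(z) = g(z) for bounded Lipschitz sub/supersolutions, this leads to a contradiction; hence the effective constant H̄(p) for which approximate correctors exist is unique (A = B). -/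

import Mathlib

open MeasureTheory Real Set Filter Metric
open scoped RealInnerProductSpace Topology

theorem stmt19 (n : ℕ) (J : EuclideanSpace ℝ (Fin n) → ℝ)
    (hJc : Continuous J) (hJnn : ∀ y, 0 ≤ J y) (hJsupp : HasCompactSupport J)
    (Jbar : ℝ) (hJbar : Jbar = ∫ y, J y)
    (c : EuclideanSpace ℝ (Fin n) → ℝ) (hcc : Continuous c) (hcb : ∃ B, ∀ z, |c z| ≤ B)
    (p : EuclideanSpace ℝ (Fin n))
    (A B : ℝ) (hAB : A < B)
    (vp vm : ℝ → EuclideanSpace ℝ (Fin n) → ℝ)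
    (hvpb : ∀ ν > (0:ℝ), ∃ Bd, ∀ z, |vp ν z| ≤ Bd)
    (hvmb : ∀ ν > (0:ℝ), ∃ Bd, ∀ z, |vm ν z| ≤ Bd)
    (hvpl : ∀ ν > (0:ℝ), ∃ L : NNReal, LipschitzWith L (vp ν))
    (hvml : ∀ ν > (0:ℝ), ∃ L : NNReal, LipschitzWith L (vm ν))
    (hvp : ∀ ν > (0:ℝ), ∀ z, Jbar -
        (∫ y, J y * Real.exp (-⟪y, p⟫) * Real.exp (vp ν (z - y) - vp ν z)) - c z ≤ A + ν)
    (hvm : ∀ ν > (0:ℝ), ∀ z, B - ν ≤ Jbar -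
        (∫ y, J y * Real.exp (-⟪y, p⟫) * Real.exp (vm ν (z - y) - vm ν z)) - c z)
    (hcomp : ∀ ε > (0:ℝ), ∀ u v g : EuclideanSpace ℝ (Fin n) → ℝ,
      (∃ Bd, ∀ z, |u z| ≤ Bd) → (∃ L : NNReal, LipschitzWith L u) →
      (∃ Bd, ∀ z, |v z| ≤ Bd) → (∃ L : NNReal, LipschitzWith L v) →
      (∀ z, ε * u z + Jbar -
          (∫ y, J y * Real.exp (-⟪y, p⟫) * Real.exp (u (z - y) - u z)) - c z ≤ g z) →
      (∀ z, g z ≤ ε * v z + Jbar -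
          (∫ y, J y * Real.exp (-⟪y, p⟫) * Real.exp (v (z - y) - v z)) - c z) →
      ∀ z, u z ≤ v z) :
    False := by
  set ν : ℝ := (B - A) / 4 with hνdef
  have hν : 0 < ν := by rw [hνdef]; linarith
  obtain ⟨Bdp, hBdp⟩ := hvpb ν hν
  obtain ⟨Bdm, hBdm⟩ := hvmb ν hν
  obtain ⟨Lp, hLp⟩ := hvpl ν hν
  obtain ⟨Lm, hLm⟩ := hvml ν hν
  have hBdp0 : 0 ≤ Bdp := le_trans (abs_nonneg _) (hBdp 0)
  have hBdm0 : 0 ≤ Bdm := le_trans (abs_nonneg _) (hBdm 0)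
  set C : ℝ := Bdp + Bdm + 1 with hCdef
  set u : EuclideanSpace ℝ (Fin n) → ℝ := fun z => vp ν z + C with hudef
  set D : ℝ := Bdp + C + Bdm + 1 with hDdef
  have hD : 0 < D := by simp only [hDdef, hCdef]; linarith
  set ε : ℝ := ν / D with hεdef
  have hε : 0 < ε := div_pos hν hD
  have hub : ∀ z, |u z| ≤ Bdp + C := fun z => by
    have := hBdp z
    have := abs_le.mp (hBdp z)
    simp only [hudef]
    rw [abs_le]
    constructor <;> [linarith [this.1]; linarith [this.2, hBdp0, hBdm0]]
  have hInt : ∀ z, (∫ y, J y * Real.exp (-⟪y, p⟫) * Real.exp (u (z - y) - u z))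
      = ∫ y, J y * Real.exp (-⟪y, p⟫) * Real.exp (vp ν (z - y) - vp ν z) := by
    intro z
    congr 1
    funext y
    have : u (z - y) - u z = vp ν (z - y) - vp ν z := by simp [hudef]
    rw [this]
  have hεu : ∀ z, ε * u z ≤ ν := by
    intro z
    have h1 : |u z| ≤ D := le_trans (hub z) (by simp only [hDdef]; linarith)
    have : ε * u z ≤ ε * D := by
      apply mul_le_mul_of_nonneg_left (le_trans (le_abs_self _) h1) hε.le
    calc ε * u z ≤ ε * D := this
      _ = ν := by rw [hεdef]; exact div_mul_cancel₀ ν hD.ne'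
  have hεv : ∀ z, -ν ≤ ε * vm ν z := by
    intro z
    have h1 : -D ≤ vm ν z := by
      have := (abs_le.mp (hBdm z)).1
      simp only [hDdef, hCdef]; linarith
    have : ε * (-D) ≤ ε * vm ν z := mul_le_mul_of_nonneg_left h1 hε.le
    calc (-ν) = ε * (-D) := by rw [hεdef, mul_neg, div_mul_cancel₀ ν hD.ne']
      _ ≤ ε * vm ν z := this
  have hsub : ∀ z, ε * u z + Jbar -
      (∫ y, J y * Real.exp (-⟪y, p⟫) * Real.exp (u (z - y) - u z)) - c z ≤ (A + B) / 2 := by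
    intro z
    rw [hInt z]
    have h1 := hvp ν hν z
    have h2 := hεu z
    have h3 : A + ν + ν = (A + B) / 2 := by rw [hνdef]; ring
    set I := ∫ y, J y * Real.exp (-⟪y, p⟫) * Real.exp (vp ν (z - y) - vp ν z) with hI
    clear_value ν u ε I
    linarith
  have hsup : ∀ z, (A + B) / 2 ≤ ε * vm ν z + Jbar -
      (∫ y, J y * Real.exp (-⟪y, p⟫) * Real.exp (vm ν (z - y) - vm ν z)) - c z := by
    intro z
    have h1 := hvm ν hν z
    have h2 := hεv z
    have h3 : B - ν - ν = (A + B) / 2 := by rw [hνdef]; ring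
    clear_value ν ε
    linarith
  have hcmp := hcomp ε hε u (vm ν) (fun _ => (A + B) / 2)
    ⟨Bdp + C, hub⟩ ⟨Lp, by rw [hudef]; exact fun x y => by simpa [edist_add_right] using hLp x y⟩ ⟨Bdm, hBdm⟩ ⟨Lm, hLm⟩ hsub hsup 0
  have h1 : Bdm + 1 ≤ u 0 := by
    have := (abs_le.mp (hBdp 0)).1
    simp only [hudef, hCdef]; linarith
  have h2 : vm ν 0 ≤ Bdm := (abs_le.mp (hBdm 0)).2
  clear_value ν u
  linarith
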